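/- For every real number k > 0 and all real numbers s < t, the arc length of the logarithmic spiral from parameter s to t is bounded by √(k² + 1)/k times the chord length: ∫_s^t ‖φ'(r)‖ dr ≤ (√(k² + 1) / k) · ‖φ(t) − φ(s)‖. -/

import Mathlib

open Real

/-- For every `k > 0` and `s < t`, the arc length of the logarithmic spiral
`φ(s) = e^{ks} (cos s, sin s)` from parameter `s` to `t` is at most
`√(k² + 1)/k` times the chord length `‖φ(t) − φ(s)‖`. -/
theorem log_spiral_arclength_le_chord (k : ℝ) (hk : 0 < k)
    (φ : ℝ → EuclideanSpace ℝ (Fin 2))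
    (hφ : φ = fun s => (WithLp.equiv 2 (Fin 2 → ℝ)).symm
      ![Real.exp (k * s) * Real.cos s, Real.exp (k * s) * Real.sin s])
    (s t : ℝ) (hst : s < t) :
    ∫ r in s..t, ‖deriv φ r‖ ≤
      (Real.sqrt (k ^ 2 + 1) / k) * ‖φ t - φ s‖ := by
  have hk2 : (0:ℝ) ≤ k ^ 2 + 1 := by positivity
  have hexp : ∀ r : ℝ, HasDerivAt (fun x => Real.exp (k * x)) (Real.exp (k * r) * k) r := by
    intro r
    have hlin : HasDerivAt (fun x : ℝ => k * x) k r := by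
      simpa using (hasDerivAt_id r).const_mul k
    exact (Real.hasDerivAt_exp (k * r)).comp r hlin
  have hd : ∀ r : ℝ, HasDerivAt φ
      ((WithLp.equiv 2 (Fin 2 → ℝ)).symm
        ![Real.exp (k * r) * (k * Real.cos r - Real.sin r),
          Real.exp (k * r) * (k * Real.sin r + Real.cos r)]) r := by
    intro r
    have h0 : HasDerivAt (fun x => Real.exp (k * x) * Real.cos x)
        (Real.exp (k * r) * (k * Real.cos r - Real.sin r)) r := by
      have := (hexp r).mul (Real.hasDerivAt_cos r)
      exact this.congr_deriv (by ring)
    have h1 : HasDerivAt (fun x => Real.exp (k * x) * Real.sin x)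
        (Real.exp (k * r) * (k * Real.sin r + Real.cos r)) r := by
      have := (hexp r).mul (Real.hasDerivAt_sin r)
      exact this.congr_deriv (by ring)
    have hpi : HasDerivAt (fun x => ![Real.exp (k * x) * Real.cos x, Real.exp (k * x) * Real.sin x])
        ![Real.exp (k * r) * (k * Real.cos r - Real.sin r),
          Real.exp (k * r) * (k * Real.sin r + Real.cos r)] r := by
      rw [hasDerivAt_pi]
      intro i
      fin_cases i
      · simpa using h0
      · simpa using h1
    have hL := ((PiLp.continuousLinearEquiv 2 ℝ (fun _ : Fin 2 => ℝ)).symm.toContinuousLinearMap).hasFDerivAt.comp_hasDerivAt r hpi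
    rw [hφ]
    exact hL
  have hnorm : ∀ r : ℝ, ‖deriv φ r‖ = Real.sqrt (k ^ 2 + 1) * Real.exp (k * r) := by
    intro r
    rw [(hd r).deriv, EuclideanSpace.norm_eq]
    have hpy := Real.sin_sq_add_cos_sq r
    have hin : ∑ i : Fin 2, ‖((WithLp.equiv 2 (Fin 2 → ℝ)).symm
        ![Real.exp (k * r) * (k * Real.cos r - Real.sin r),
          Real.exp (k * r) * (k * Real.sin r + Real.cos r)] : EuclideanSpace ℝ (Fin 2)) i‖ ^ 2
        = (k ^ 2 + 1) * Real.exp (k * r) ^ 2 := by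
      simp [Fin.sum_univ_two, Real.norm_eq_abs, sq_abs]
      nlinarith [hpy, Real.exp_pos (k * r)]
    rw [hin, Real.sqrt_mul hk2, Real.sqrt_sq (Real.exp_pos _).le]
  have hn : ∀ r : ℝ, ‖φ r‖ = Real.exp (k * r) := by
    intro r
    rw [hφ]
    rw [EuclideanSpace.norm_eq]
    have hpy := Real.sin_sq_add_cos_sq r
    have hin : ∑ i : Fin 2, ‖((WithLp.equiv 2 (Fin 2 → ℝ)).symm
        ![Real.exp (k * r) * Real.cos r, Real.exp (k * r) * Real.sin r] : EuclideanSpace ℝ (Fin 2)) i‖ ^ 2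
        = Real.exp (k * r) ^ 2 := by
      simp [Fin.sum_univ_two, Real.norm_eq_abs, sq_abs]
      nlinarith [hpy]
    rw [hin, Real.sqrt_sq (Real.exp_pos _).le]
  have hchord : Real.exp (k * t) - Real.exp (k * s) ≤ ‖φ t - φ s‖ := by
    calc Real.exp (k * t) - Real.exp (k * s) = ‖φ t‖ - ‖φ s‖ := by rw [hn, hn]
      _ ≤ ‖φ t - φ s‖ := norm_sub_norm_le _ _
  have hint : ∫ r in s..t, ‖deriv φ r‖
      = Real.sqrt (k ^ 2 + 1) * ((Real.exp (k * t) - Real.exp (k * s)) / k) := by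
    simp only [hnorm]
    rw [intervalIntegral.integral_const_mul]
    have : ∫ r in s..t, Real.exp (k * r) = (Real.exp (k * t) - Real.exp (k * s)) / k := by
      have hF : ∀ r ∈ Set.uIcc s t, HasDerivAt (fun x => Real.exp (k * x) / k) (Real.exp (k * r)) r := by
        intro r _
        have := (hexp r).div_const k
        exact this.congr_deriv (by field_simp)
      rw [intervalIntegral.integral_eq_sub_of_hasDerivAt hF]
      · ring
      · exact (Continuous.continuousOn (by continuity)).intervalIntegrable
    rw [this]
  rw [hint]
  have hsq : 0 ≤ Real.sqrt (k ^ 2 + 1) / k := by positivity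
  calc Real.sqrt (k ^ 2 + 1) * ((Real.exp (k * t) - Real.exp (k * s)) / k)
      = (Real.sqrt (k ^ 2 + 1) / k) * (Real.exp (k * t) - Real.exp (k * s)) := by ring
    _ ≤ (Real.sqrt (k ^ 2 + 1) / k) * ‖φ t - φ s‖ := mul_le_mul_of_nonneg_left hchord hsq
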